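/- With I a proper two-sided ideal of a ℤ-graded ring R, the image t̄ of t in B = R[t]/⟨I*⟩ is not a zero divisor in B; consequently the ideal ⟨1 − t̄⟩ contains no nonzero homogeneous element of B. -/

import Mathlib

set_option linter.unusedSectionVars false

open DirectSum Polynomial
open scoped Classical

variable {R : Type*} [Ring R]

/-- The top degree of `f` (junk value `0` for `f = 0`). -/
noncomputable def deg (A : ℤ → AddSubgroup R) [GradedRing A] (f : R) : ℤ :=
  ((DirectSum.decompose A f).support.max).unbotD 0

/-- The leading homogeneous part `LH f` of `f`. -/
noncomputable def LH (A : ℤ → AddSubgroup R) [GradedRing A] (f : R) : R :=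
  (DirectSum.decompose A f (deg A f) : R)

/-- The homogenization `f*` of `f` with respect to the central degree-one variable `t = X`. -/
noncomputable def homog (A : ℤ → AddSubgroup R) [GradedRing A] (f : R) : Polynomial R :=
  ∑ i ∈ (DirectSum.decompose A f).support,
    Polynomial.C (DirectSum.decompose A f i : R) * Polynomial.X ^ (deg A f - i).toNat

/-- Dehomogenization `F ↦ F_*`, i.e. evaluation of `t = X` at `1`. -/
noncomputable def dehom : Polynomial R →+* R :=
  Polynomial.eval₂RingHom' (RingHom.id R) 1 (fun a => Commute.one_right a)

/-- The degree-`p` component of the mixed gradation on `R[t]`, spanned by the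
elements `a * t^j` with `a ∈ A i` and `i + j = p`. -/
noncomputable def mixed (A : ℤ → AddSubgroup R) (p : ℤ) : AddSubgroup (Polynomial R) :=
  AddSubgroup.closure
    { F | ∃ (i : ℤ) (j : ℕ) (a : R), a ∈ A i ∧ i + (j : ℤ) = p ∧
        F = Polynomial.C a * Polynomial.X ^ j }

section Aux

variable (A : ℤ → AddSubgroup R) [GradedRing A]

/-- Degree-`p` component of a polynomial for the mixed gradation. -/
noncomputable def cpt (p : ℤ) (F : Polynomial R) : Polynomial R :=
  ∑ j ∈ F.support,
    Polynomial.C (DirectSum.decompose A (F.coeff j) (p - (j : ℤ)) : R) * Polynomial.X ^ j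

lemma coeff_cpt (p : ℤ) (F : Polynomial R) (k : ℕ) :
    (cpt A p F).coeff k = (DirectSum.decompose A (F.coeff k) (p - (k : ℤ)) : R) := by
  rw [cpt, Polynomial.finset_sum_coeff]
  simp only [Polynomial.coeff_C_mul, Polynomial.coeff_X_pow, mul_ite, mul_one, mul_zero]
  rw [Finset.sum_ite_eq F.support k]
  split_ifs with h
  · rfl
  · rw [Polynomial.notMem_support_iff.mp h, DirectSum.decompose_zero]
    simp

lemma mem_mixed_iff (p : ℤ) (F : Polynomial R) :
    F ∈ mixed A p ↔ ∀ k : ℕ, F.coeff k ∈ A (p - (k : ℤ)) := by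
  constructor
  · intro h
    refine AddSubgroup.closure_induction
      (p := fun G _ => ∀ k : ℕ, G.coeff k ∈ A (p - (k : ℤ))) ?_ ?_ ?_ ?_ h
    · rintro x ⟨i, j, a, ha, hij, rfl⟩ k
      rw [Polynomial.coeff_C_mul, Polynomial.coeff_X_pow]
      split_ifs with hkj
      · subst hkj
        rw [mul_one]
        convert ha using 2
        omega
      · rw [mul_zero]; exact zero_mem _
    · intro k; simp only [Polynomial.coeff_zero]; exact zero_mem _
    · intro x y _ _ hx hy k
      rw [Polynomial.coeff_add]; exact add_mem (hx k) (hy k)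
    · intro x _ hx k
      rw [Polynomial.coeff_neg]; exact neg_mem (hx k)
  · intro h
    have h2 : (∑ j ∈ F.support, Polynomial.C (F.coeff j) * Polynomial.X ^ j) ∈ mixed A p :=
      AddSubgroup.sum_mem _ fun j _ =>
        AddSubgroup.subset_closure ⟨p - (j : ℤ), j, F.coeff j, h j, by ring, rfl⟩
    rwa [← Polynomial.as_sum_support_C_mul_X_pow F] at h2

lemma cpt_mem_mixed (p : ℤ) (F : Polynomial R) : cpt A p F ∈ mixed A p :=
  (mem_mixed_iff A p _).2 fun k => by rw [coeff_cpt]; exact SetLike.coe_mem _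

lemma cpt_add (p : ℤ) (F G : Polynomial R) :
    cpt A p (F + G) = cpt A p F + cpt A p G := by
  ext k
  simp only [coeff_cpt, Polynomial.coeff_add, DirectSum.decompose_add, DirectSum.add_apply,
    AddSubgroup.coe_add]

lemma cpt_zero (p : ℤ) : cpt A p (0 : Polynomial R) = 0 := by
  ext k
  simp [coeff_cpt]

lemma cpt_neg (p : ℤ) (F : Polynomial R) : cpt A p (-F) = -cpt A p F := by
  have h := cpt_add A p F (-F)
  rw [add_neg_cancel, cpt_zero] at h
  exact eq_neg_of_add_eq_zero_right h.symm

lemma cpt_of_mem {p q : ℤ} {F : Polynomial R} (hF : F ∈ mixed A q) :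
    cpt A p F = if p = q then F else 0 := by
  rw [mem_mixed_iff] at hF
  split_ifs with h
  · subst h; ext k; rw [coeff_cpt, DirectSum.decompose_of_mem_same A (hF k)]
  · ext k
    rw [coeff_cpt, DirectSum.decompose_of_mem_ne A (hF k)
      (show q - (k : ℤ) ≠ p - (k : ℤ) by omega), Polynomial.coeff_zero]

lemma exists_cpt_sum (F : Polynomial R) : ∃ s : Finset ℤ, ∑ p ∈ s, cpt A p F = F := by
  refine ⟨F.support.biUnion fun j =>
    (DirectSum.decompose A (F.coeff j)).support.image (fun i => i + (j : ℤ)), ?_⟩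
  ext k
  rw [Polynomial.finset_sum_coeff]
  simp only [coeff_cpt]
  by_cases hk : k ∈ F.support
  · set s := F.support.biUnion fun j =>
      (DirectSum.decompose A (F.coeff j)).support.image (fun i => i + (j : ℤ)) with hs
    set b := F.coeff k with hb
    have hsub : (DirectSum.decompose A b).support ⊆ s.image (fun p => p - (k : ℤ)) := by
      intro i hi
      exact Finset.mem_image.mpr ⟨i + (k : ℤ),
        Finset.mem_biUnion.mpr ⟨k, hk, Finset.mem_image.mpr ⟨i, hi, rfl⟩⟩, by ring⟩
    calc ∑ p ∈ s, ((DirectSum.decompose A b) (p - (k : ℤ)) : R)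
        = ∑ i ∈ s.image (fun p => p - (k : ℤ)), ((DirectSum.decompose A b) i : R) :=
          (Finset.sum_image (f := fun i => ((DirectSum.decompose A b) i : R)) (g := fun p => p - (k : ℤ)) (by intro x _ y _ h; have h2 : x - (k : ℤ) = y - (k : ℤ) := h; omega)).symm
      _ = ∑ i ∈ (DirectSum.decompose A b).support, ((DirectSum.decompose A b) i : R) :=
          (Finset.sum_subset hsub (by
            intro i _ hi
            rw [DFinsupp.notMem_support_iff.mp hi]
            rfl)).symm
      _ = b := DirectSum.sum_support_decompose A b
  · rw [Polynomial.notMem_support_iff.mp hk]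
    apply Finset.sum_eq_zero
    intro p _
    rw [DirectSum.decompose_zero]
    simp

end Aux
section Aux2

variable (A : ℤ → AddSubgroup R) [GradedRing A]

lemma cpt_monomial_mul {a : R} {i : ℤ} (ha : a ∈ A i) (j : ℕ) (p : ℤ) (F : Polynomial R) :
    cpt A p (Polynomial.C a * Polynomial.X ^ j * F)
      = Polynomial.C a * Polynomial.X ^ j * cpt A (p - i - (j : ℤ)) F := by
  have hc : ∀ G : Polynomial R,
      Polynomial.C a * Polynomial.X ^ j * G = Polynomial.C a * G * Polynomial.X ^ j := by
    intro G; rw [mul_assoc, Polynomial.X_pow_mul, ← mul_assoc]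
  rw [hc, hc]
  ext k
  rw [coeff_cpt, Polynomial.coeff_mul_X_pow', Polynomial.coeff_mul_X_pow']
  split_ifs with h
  · rw [Polynomial.coeff_C_mul, Polynomial.coeff_C_mul, coeff_cpt,
      show (p - i - (j : ℤ)) - ((k - j : ℕ) : ℤ) = p - i - (k : ℤ) from by omega,
      show p - (k : ℤ) = i + (p - i - (k : ℤ)) from by ring,
      DirectSum.coe_decompose_mul_add_of_left_mem A ha]
  · rw [DirectSum.decompose_zero]; simp

lemma cpt_mul_monomial {a : R} {i : ℤ} (ha : a ∈ A i) (j : ℕ) (p : ℤ) (F : Polynomial R) :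
    cpt A p (F * (Polynomial.C a * Polynomial.X ^ j))
      = cpt A (p - i - (j : ℤ)) F * (Polynomial.C a * Polynomial.X ^ j) := by
  have hc : ∀ G : Polynomial R,
      G * (Polynomial.C a * Polynomial.X ^ j) = G * Polynomial.C a * Polynomial.X ^ j := by
    intro G; rw [mul_assoc]
  rw [hc, hc]
  ext k
  rw [coeff_cpt, Polynomial.coeff_mul_X_pow', Polynomial.coeff_mul_X_pow']
  split_ifs with h
  · rw [Polynomial.coeff_mul_C, Polynomial.coeff_mul_C, coeff_cpt,
      show (p - i - (j : ℤ)) - ((k - j : ℕ) : ℤ) = p - i - (k : ℤ) from by omega,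
      show p - (k : ℤ) = (p - i - (k : ℤ)) + i from by ring,
      DirectSum.coe_decompose_mul_add_of_right_mem A ha]
  · rw [DirectSum.decompose_zero]; simp

lemma mem_closure_monomials (F : Polynomial R) :
    F ∈ AddSubgroup.closure
      {G : Polynomial R | ∃ (i : ℤ) (j : ℕ) (a : R), a ∈ A i ∧ G = Polynomial.C a * Polynomial.X ^ j} := by
  have hmono : ∀ (b : R) (j : ℕ), Polynomial.C b * Polynomial.X ^ j ∈ AddSubgroup.closure
      {G : Polynomial R | ∃ (i : ℤ) (j : ℕ) (a : R), a ∈ A i ∧ G = Polynomial.C a * Polynomial.X ^ j} := by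
    intro b j
    have hb : (∑ i ∈ (DirectSum.decompose A b).support,
        Polynomial.C ((DirectSum.decompose A b i : R))) * Polynomial.X ^ j
        = Polynomial.C b * Polynomial.X ^ j := by
      rw [← map_sum, DirectSum.sum_support_decompose]
    rw [← hb, Finset.sum_mul]
    exact AddSubgroup.sum_mem _ fun i _ =>
      AddSubgroup.subset_closure ⟨i, j, _, SetLike.coe_mem _, rfl⟩
  have h2 : (∑ j ∈ F.support, Polynomial.C (F.coeff j) * Polynomial.X ^ j) ∈
      AddSubgroup.closure
      {G : Polynomial R | ∃ (i : ℤ) (j : ℕ) (a : R), a ∈ A i ∧ G = Polynomial.C a * Polynomial.X ^ j} :=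
    AddSubgroup.sum_mem _ fun j _ => hmono _ j
  rwa [← Polynomial.as_sum_support_C_mul_X_pow F] at h2

lemma dehom_C (a : R) : dehom (Polynomial.C a) = a := by
  show Polynomial.eval₂ (RingHom.id R) 1 (Polynomial.C a) = a
  simp

lemma dehom_X : dehom (Polynomial.X : Polynomial R) = 1 := by
  show Polynomial.eval₂ (RingHom.id R) 1 (Polynomial.X : Polynomial R) = 1
  simp

lemma dehom_apply (F : Polynomial R) : dehom F = ∑ j ∈ F.support, F.coeff j := by
  show Polynomial.eval₂ (RingHom.id R) 1 F = _
  rw [Polynomial.eval₂_eq_sum, Polynomial.sum_def]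
  simp

lemma dehom_homog (f : R) : dehom (homog A f) = f := by
  rw [homog, map_sum]
  simp only [map_mul, map_pow, dehom_C, dehom_X, one_pow, mul_one]
  exact DirectSum.sum_support_decompose A f

lemma le_deg {f : R} {i : ℤ} (hi : i ∈ (DirectSum.decompose A f).support) : i ≤ deg A f := by
  rw [deg]
  have hne : (DirectSum.decompose A f).support.Nonempty := ⟨i, hi⟩
  rw [← Finset.coe_max' hne, WithBot.unbotD_coe]
  exact Finset.le_max' _ _ hi

lemma homog_mem_mixed (f : R) : homog A f ∈ mixed A (deg A f) := by
  unfold homog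
  exact AddSubgroup.sum_mem _ fun i hi => AddSubgroup.subset_closure
    ⟨i, (deg A f - i).toNat, _, SetLike.coe_mem _, by have := le_deg A hi; omega, rfl⟩

end Aux2
section JLemmas

variable (A : ℤ → AddSubgroup R) [GradedRing A] (I : TwoSidedIdeal R)

lemma dehom_mem {F : Polynomial R}
    (hF : F ∈ TwoSidedIdeal.span (homog A '' (I : Set R))) : dehom F ∈ I := by
  have h := TwoSidedIdeal.mem_span_iff.mp hF (TwoSidedIdeal.comap dehom I) ?_
  · rwa [TwoSidedIdeal.mem_comap] at h
  · rintro _ ⟨f, hf, rfl⟩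
    rw [SetLike.mem_coe, TwoSidedIdeal.mem_comap, dehom_homog]
    exact hf

lemma mem_J_of_mixed {p : ℤ} {F : Polynomial R} (hF : F ∈ mixed A p) (hd : dehom F ∈ I) :
    F ∈ TwoSidedIdeal.span (homog A '' (I : Set R)) := by
  by_cases h0 : F = 0
  · rw [h0]; exact zero_mem _
  rw [mem_mixed_iff] at hF
  set g := dehom F with hg
  have hsupp : F.support.Nonempty := Polynomial.support_nonempty.mpr h0
  set m := F.support.min' hsupp with hm
  have hgsum : g = ∑ j ∈ F.support, F.coeff j := dehom_apply F
  have key : ∀ (s : Finset ℕ) (c : ℕ → R), (∀ j ∈ s, c j ∈ A (p - (j : ℤ))) →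
      ∀ i : ℤ, (DirectSum.decompose A (∑ j ∈ s, c j) i : R)
        = ∑ j ∈ s, if i = p - (j : ℤ) then c j else 0 := by
    intro s
    induction s using Finset.induction with
    | empty => intro c _ i; simp
    | @insert a s hnot ih =>
      intro c hc i
      rw [Finset.sum_insert hnot, DirectSum.decompose_add, DirectSum.add_apply,
        AddSubgroup.coe_add, ih _ (fun j hj => hc j (Finset.mem_insert_of_mem hj)),
        Finset.sum_insert hnot]
      congr 1
      by_cases h : i = p - (a : ℤ)
      · rw [if_pos h, h]
        exact DirectSum.decompose_of_mem_same A (hc a (Finset.mem_insert_self a s))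
      · rw [if_neg h]
        exact DirectSum.decompose_of_mem_ne A (hc a (Finset.mem_insert_self a s))
          (fun hh => h hh.symm)
  have hdec : ∀ i : ℤ, (DirectSum.decompose A g i : R)
      = ∑ j ∈ F.support, if i = p - (j : ℤ) then F.coeff j else 0 := by
    intro i
    rw [hgsum]
    exact key F.support _ (fun j _ => hF j) i
  have hval : ∀ j ∈ F.support, (DirectSum.decompose A g (p - (j : ℤ)) : R) = F.coeff j := by
    intro j hj
    rw [hdec, Finset.sum_eq_single j]
    · rw [if_pos rfl]
    · intro b hb hbj
      rw [if_neg]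
      intro hh
      exact hbj (by omega)
    · intro h; exact absurd hj h
  have hsupport : (DirectSum.decompose A g).support = F.support.image (fun j : ℕ => p - (j : ℤ)) := by
    ext i
    rw [DFinsupp.mem_support_iff, Finset.mem_image]
    constructor
    · intro hi
      by_contra hcon
      push_neg at hcon
      apply hi
      have hz : (DirectSum.decompose A g i : R) = 0 := by
        rw [hdec i]
        apply Finset.sum_eq_zero
        intro j hj
        rw [if_neg]
        exact fun h => hcon j hj h.symm
      exact Subtype.ext hz
    · rintro ⟨j, hj, rfl⟩
      intro hzero
      exact Polynomial.mem_support_iff.mp hj (by rw [← hval j hj, hzero]; simp)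
  have hdeg : deg A g = p - (m : ℤ) := by
    rw [deg, hsupport]
    have hne : (F.support.image (fun j : ℕ => p - (j : ℤ))).Nonempty := hsupp.image _
    rw [← Finset.coe_max' hne, WithBot.unbotD_coe]
    apply le_antisymm
    · apply Finset.max'_le
      intro y hy
      obtain ⟨j, hj, rfl⟩ := Finset.mem_image.mp hy
      have := F.support.min'_le j hj
      omega
    · exact Finset.le_max' (F.support.image (fun j : ℕ => p - (j : ℤ))) (p - (m : ℤ))
        (Finset.mem_image.mpr ⟨m, F.support.min'_mem hsupp, rfl⟩)
  have hhom : homog A g = ∑ j ∈ F.support, Polynomial.C (F.coeff j) * Polynomial.X ^ (j - m) := by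
    rw [homog, hsupport, hdeg]
    rw [Finset.sum_image (g := fun j : ℕ => p - (j : ℤ))
      (fun x _ y _ h => by have h2 : p - (x : ℤ) = p - (y : ℤ) := h; omega)]
    apply Finset.sum_congr rfl
    intro j hj
    rw [hval j hj]
    congr 1
    have hmj : m ≤ j := F.support.min'_le j hj
    congr 1
    omega
  have hFX : F = Polynomial.X ^ m * homog A g := by
    rw [hhom, Finset.mul_sum]
    conv_lhs => rw [Polynomial.as_sum_support_C_mul_X_pow F]
    apply Finset.sum_congr rfl
    intro j hj
    have hmj : m ≤ j := F.support.min'_le j hj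
    rw [Polynomial.X_pow_mul, mul_assoc, ← pow_add]
    congr 2
    omega
  rw [hFX]
  exact TwoSidedIdeal.mul_mem_left _ _ _
    (TwoSidedIdeal.subset_span ⟨g, hd, rfl⟩)

end JLemmas
section JGraded

variable (A : ℤ → AddSubgroup R) [GradedRing A] (I : TwoSidedIdeal R)

lemma cpt_mul_left_mem {F : Polynomial R}
    (hF : ∀ q, cpt A q F ∈ TwoSidedIdeal.span (homog A '' (I : Set R))) (G : Polynomial R) :
    ∀ p, cpt A p (G * F) ∈ TwoSidedIdeal.span (homog A '' (I : Set R)) := by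
  refine AddSubgroup.closure_induction
    (p := fun H _ => ∀ p, cpt A p (H * F) ∈ TwoSidedIdeal.span (homog A '' (I : Set R)))
    ?_ ?_ ?_ ?_ (mem_closure_monomials A G)
  · rintro x ⟨i, j, a, ha, rfl⟩ p
    rw [cpt_monomial_mul A ha]
    exact TwoSidedIdeal.mul_mem_left _ _ _ (hF _)
  · intro p; rw [zero_mul, cpt_zero]; exact zero_mem _
  · intro x y _ _ hx hy p
    rw [add_mul, cpt_add]; exact add_mem (hx p) (hy p)
  · intro x _ hx p
    rw [neg_mul, cpt_neg]; exact neg_mem (hx p)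

lemma cpt_mul_right_mem {F : Polynomial R}
    (hF : ∀ q, cpt A q F ∈ TwoSidedIdeal.span (homog A '' (I : Set R))) (G : Polynomial R) :
    ∀ p, cpt A p (F * G) ∈ TwoSidedIdeal.span (homog A '' (I : Set R)) := by
  refine AddSubgroup.closure_induction
    (p := fun H _ => ∀ p, cpt A p (F * H) ∈ TwoSidedIdeal.span (homog A '' (I : Set R)))
    ?_ ?_ ?_ ?_ (mem_closure_monomials A G)
  · rintro x ⟨i, j, a, ha, rfl⟩ p
    rw [cpt_mul_monomial A ha]
    exact TwoSidedIdeal.mul_mem_right _ _ _ (hF _)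
  · intro p; rw [mul_zero, cpt_zero]; exact zero_mem _
  · intro x y _ _ hx hy p
    rw [mul_add, cpt_add]; exact add_mem (hx p) (hy p)
  · intro x _ hx p
    rw [mul_neg, cpt_neg]; exact neg_mem (hx p)

lemma cpt_mem_J {F : Polynomial R}
    (hF : F ∈ TwoSidedIdeal.span (homog A '' (I : Set R))) (p : ℤ) :
    cpt A p F ∈ TwoSidedIdeal.span (homog A '' (I : Set R)) := by
  set J := TwoSidedIdeal.span (homog A '' (I : Set R)) with hJ
  let S : TwoSidedIdeal (Polynomial R) := TwoSidedIdeal.mk'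
    {F | F ∈ J ∧ ∀ p, cpt A p F ∈ J}
    ⟨zero_mem _, fun p => by rw [cpt_zero]; exact zero_mem _⟩
    (fun {x y} hx hy => ⟨add_mem hx.1 hy.1,
      fun p => by rw [cpt_add]; exact add_mem (hx.2 p) (hy.2 p)⟩)
    (fun {x} hx => ⟨neg_mem hx.1, fun p => by rw [cpt_neg]; exact neg_mem (hx.2 p)⟩)
    (fun {x y} hy => ⟨TwoSidedIdeal.mul_mem_left _ _ _ hy.1, cpt_mul_left_mem A I hy.2 x⟩)
    (fun {x y} hx => ⟨TwoSidedIdeal.mul_mem_right _ _ _ hx.1, cpt_mul_right_mem A I hx.2 y⟩)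
  have hS : F ∈ S := by
    refine TwoSidedIdeal.mem_span_iff.mp hF S ?_
    rintro _ ⟨f, hf, rfl⟩
    rw [SetLike.mem_coe, TwoSidedIdeal.mem_mk']
    refine ⟨TwoSidedIdeal.subset_span ⟨f, hf, rfl⟩, fun q => ?_⟩
    rw [cpt_of_mem A (homog_mem_mixed A f)]
    split_ifs
    · exact TwoSidedIdeal.subset_span ⟨f, hf, rfl⟩
    · exact zero_mem _
  rw [TwoSidedIdeal.mem_mk'] at hS
  exact hS.2 p

end JGraded
section Main

lemma ringCon_mk'_surjective {S : Type*} [Ring S] (c : RingCon S) :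
    Function.Surjective c.mk' := fun b =>
  Quotient.inductionOn b fun F => ⟨F, rfl⟩

lemma mk'_eq_zero_iff {S : Type*} [Ring S] (J : TwoSidedIdeal S) (F : S) :
    J.ringCon.mk' F = 0 ↔ F ∈ J := by
  constructor
  · intro h
    have h0 : (F : J.ringCon.Quotient) = ((0 : S) : J.ringCon.Quotient) := by
      simpa using h
    have h1 := J.ringCon.eq.mp h0
    rwa [TwoSidedIdeal.rel_iff, sub_zero] at h1
  · intro h
    have h1 : J.ringCon F 0 := by rw [TwoSidedIdeal.rel_iff, sub_zero]; exact h
    have h0 : (F : J.ringCon.Quotient) = ((0 : S) : J.ringCon.Quotient) :=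
      J.ringCon.eq.mpr h1
    simpa using h0

/-- For a proper two-sided ideal `I` of `R`, the image `t̄` of `t` in
`B = R[t]/⟨I*⟩` is not a zero divisor, and consequently the ideal `⟨1 - t̄⟩` of `B`
contains no nonzero homogeneous element (for the quotient of the mixed gradation). -/
theorem stmt8 (A : ℤ → AddSubgroup R) [GradedRing A] (I : TwoSidedIdeal R) (hI : I ≠ ⊤) :
    (∀ b : (TwoSidedIdeal.span (homog A '' (I : Set R))).ringCon.Quotient,
      (TwoSidedIdeal.span (homog A '' (I : Set R))).ringCon.mk' Polynomial.X * b = 0 → b = 0) ∧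
    (∀ b : (TwoSidedIdeal.span (homog A '' (I : Set R))).ringCon.Quotient,
      b * (TwoSidedIdeal.span (homog A '' (I : Set R))).ringCon.mk' Polynomial.X = 0 → b = 0) ∧
    (∀ (p : ℤ) (b : (TwoSidedIdeal.span (homog A '' (I : Set R))).ringCon.Quotient),
      b ∈ AddSubgroup.map
        ((TwoSidedIdeal.span (homog A '' (I : Set R))).ringCon.mk' :
          Polynomial R →+* _).toAddMonoidHom (mixed A p) →
      b ∈ TwoSidedIdeal.span
        {1 - (TwoSidedIdeal.span (homog A '' (I : Set R))).ringCon.mk' Polynomial.X} →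
      b = 0) := by
  set J := TwoSidedIdeal.span (homog A '' (I : Set R)) with hJdef
  have hone : (1 : R) ∈ A 0 := SetLike.one_mem_graded A
  have hcomp : ∀ F : Polynomial R, (∀ q, dehom (cpt A q F) ∈ I) → F ∈ J := by
    intro F h
    obtain ⟨s, hs⟩ := exists_cpt_sum A F
    rw [← hs]
    exact sum_mem fun q _ => mem_J_of_mixed A I (cpt_mem_mixed A q F) (h q)
  refine ⟨?_, ?_, ?_⟩
  · -- left regularity of t̄
    intro b hb
    obtain ⟨F, rfl⟩ := ringCon_mk'_surjective J.ringCon b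
    rw [← map_mul] at hb
    have hXF : Polynomial.X * F ∈ J := (mk'_eq_zero_iff J _).mp hb
    rw [mk'_eq_zero_iff]
    apply hcomp
    intro q
    have h1 : cpt A (q + 1) (Polynomial.X * F) ∈ J := cpt_mem_J A I hXF (q + 1)
    have h2 := cpt_monomial_mul A hone 1 (q + 1) F
    simp only [Polynomial.C_1, pow_one, one_mul] at h2
    rw [show q + 1 - 0 - ((1 : ℕ) : ℤ) = q from by push_cast; ring] at h2
    rw [h2] at h1
    have hd := dehom_mem A I h1
    rwa [map_mul, dehom_X, one_mul] at hd
  · -- right regularity of t̄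
    intro b hb
    obtain ⟨F, rfl⟩ := ringCon_mk'_surjective J.ringCon b
    rw [← map_mul] at hb
    have hXF : F * Polynomial.X ∈ J := (mk'_eq_zero_iff J _).mp hb
    rw [mk'_eq_zero_iff]
    apply hcomp
    intro q
    have h1 : cpt A (q + 1) (F * Polynomial.X) ∈ J := cpt_mem_J A I hXF (q + 1)
    have h2 := cpt_mul_monomial A hone 1 (q + 1) F
    simp only [Polynomial.C_1, pow_one, one_mul] at h2
    rw [show q + 1 - 0 - ((1 : ℕ) : ℤ) = q from by push_cast; ring] at h2
    rw [h2] at h1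
    have hd := dehom_mem A I h1
    rwa [map_mul, dehom_X, mul_one] at hd
  · -- no nonzero homogeneous elements in ⟨1 - t̄⟩
    intro p b hb hmem
    obtain ⟨F, hFmix, hFb⟩ := hb
    have hFb' : J.ringCon.mk' F = b := hFb
    let K : TwoSidedIdeal J.ringCon.Quotient := TwoSidedIdeal.mk'
      {b | ∃ G : Polynomial R, J.ringCon.mk' G = b ∧ dehom G ∈ I}
      ⟨0, map_zero _, by simpa using zero_mem I⟩
      (fun {x y} hx hy => by
        obtain ⟨G1, e1, m1⟩ := hx
        obtain ⟨G2, e2, m2⟩ := hy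
        exact ⟨G1 + G2, by rw [map_add, e1, e2], by rw [map_add]; exact add_mem m1 m2⟩)
      (fun {x} hx => by
        obtain ⟨G, e, m⟩ := hx
        exact ⟨-G, by rw [map_neg, e], by rw [map_neg]; exact neg_mem m⟩)
      (fun {x y} hy => by
        obtain ⟨G, e, m⟩ := hy
        obtain ⟨H, rfl⟩ := ringCon_mk'_surjective J.ringCon x
        exact ⟨H * G, by rw [map_mul, e], by
          rw [map_mul]; exact TwoSidedIdeal.mul_mem_left _ _ _ m⟩)
      (fun {x y} hx => by
        obtain ⟨G, e, m⟩ := hx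
        obtain ⟨H, rfl⟩ := ringCon_mk'_surjective J.ringCon y
        exact ⟨G * H, by rw [map_mul, e], by
          rw [map_mul]; exact TwoSidedIdeal.mul_mem_right _ _ _ m⟩)
    have hbK : b ∈ K := by
      refine TwoSidedIdeal.mem_span_iff.mp hmem K ?_
      rintro x hx
      rw [Set.mem_singleton_iff] at hx
      subst hx
      rw [SetLike.mem_coe, TwoSidedIdeal.mem_mk']
      exact ⟨1 - Polynomial.X, by rw [map_sub, map_one],
        by rw [map_sub, dehom_X]; simpa using zero_mem I⟩
    rw [TwoSidedIdeal.mem_mk'] at hbK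
    obtain ⟨G, hGb, hGI⟩ := hbK
    have hGFq : J.ringCon.mk' G = J.ringCon.mk' F := hGb.trans hFb'.symm
    have hGF : G - F ∈ J := by
      have h1 : (G : J.ringCon.Quotient) = (F : J.ringCon.Quotient) := hGFq
      have h2 := J.ringCon.eq.mp h1
      rwa [TwoSidedIdeal.rel_iff] at h2
    have hdF : dehom F ∈ I := by
      have h1 : dehom (G - F) ∈ I := dehom_mem A I hGF
      have h3 : dehom F = dehom G - dehom (G - F) := by rw [map_sub, sub_sub_cancel]
      rw [h3]
      exact sub_mem hGI h1
    have hFJ : F ∈ J := mem_J_of_mixed A I hFmix hdF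
    rw [← hFb']
    exact (mk'_eq_zero_iff J F).mpr hFJ

end Main
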